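/- For a nonempty set X, the number of atoms of the C-algebra 𝟛^X equals 2·|X|. -/
import Mathlib


/-- The three truth values of McCarthy's three-valued logic. -/
inductive Three : Type
  | T | F | U
deriving DecidableEq

open Three

/-- Negation in `𝟛`. -/
def tneg : Three → Three
  | T => F
  | F => T
  | U => U

/-- McCarthy's left-sequential conjunction. -/
def tand : Three → Three → Three
  | T, x => x
  | F, _ => F
  | U, _ => U

/-- McCarthy's left-sequential disjunction. -/
def tor : Three → Three → Three
  | T, _ => T
  | F, x => x
  | U, _ => U

/-- Pointwise disjunction on `𝟛^X`. -/
def fOr {X : Type*} (α β : X → Three) : X → Three := fun x => tor (α x) (β x)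

/-- Pointwise conjunction on `𝟛^X`. -/
def fAnd {X : Type*} (α β : X → Three) : X → Three := fun x => tand (α x) (β x)

/-- Pointwise negation on `𝟛^X`. -/
def fNeg {X : Type*} (α : X → Three) : X → Three := fun x => tneg (α x)

/-- The constant function `F`, the bottom element of `𝟛^X`. -/
def bF {X : Type*} : X → Three := fun _ => F

/-- The order on `𝟛^X`: `α ≤ β` iff `α ∨ β = β`. -/
def fLe {X : Type*} (α β : X → Three) : Prop := fOr α β = β

/-- `α` is an atom of `𝟛^X`: `α ≠ F` and any `b` with `F ≤ b ≤ α`, `b ≠ α` is `F`. -/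
def IsAtom3 {X : Type*} (α : X → Three) : Prop :=
  α ≠ bF ∧ ∀ β : X → Three, fLe bF β → fLe β α → β ≠ α → β = bF


open Classical in
/-- The function that is `v` at `x₀` and `F` elsewhere. -/
noncomputable def single {X : Type*} (x₀ : X) (v : Three) : X → Three :=
  fun x => if x = x₀ then v else F

lemma fLe_bot {X : Type*} (β : X → Three) : fLe bF β := funext fun _ => rfl

lemma fLe_cases {X : Type*} {α β : X → Three} (h : fLe β α) (x : X) :
    β x = F ∨ β x = α x := by
  have h := congrFun h x
  simp only [fOr] at h
  cases hb : β x <;> cases ha : α x <;> rw [hb, ha] at h <;> simp_all [tor]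

lemma single_isAtom {X : Type*} (x₀ : X) (v : Three) (hv : v ≠ F) :
    IsAtom3 (single x₀ v) := by
  constructor
  · intro h
    have := congrFun h x₀
    simp [single, bF] at this
    exact hv this
  · intro β _ hle hne
    have hx : β x₀ = F := by
      by_contra hx
      rcases fLe_cases hle x₀ with h1 | h1
      · exact hx h1
      · apply hne
        funext z
        by_cases hz : z = x₀
        · subst hz; simpa [single] using h1
        · rcases fLe_cases hle z with h2 | h2
          · simp [single, hz, h2]
          · simp only [single, hz, if_neg hz] at h2 ⊢; exact h2
    funext y
    show β y = F
    by_cases hy : y = x₀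
    · subst hy; exact hx
    · rcases fLe_cases hle y with h2 | h2
      · exact h2
      · simpa [single, hy] using h2

lemma atom_form {X : Type*} {α : X → Three} (h : IsAtom3 α) :
    ∃ x₀, α x₀ ≠ F ∧ α = single x₀ (α x₀) := by
  obtain ⟨hne, hmin⟩ := h
  have hex : ∃ x₀, α x₀ ≠ F := by
    by_contra hc; push_neg at hc; exact hne (funext fun x => hc x)
  obtain ⟨x₀, hx₀⟩ := hex
  refine ⟨x₀, hx₀, ?_⟩
  have hle : fLe (single x₀ (α x₀)) α := by
    funext y
    simp only [fOr, single]
    by_cases hy : y = x₀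
    · subst hy; simp only [if_pos rfl]; cases α y <;> rfl
    · simp only [if_neg hy]; rfl
  by_contra hne'
  have hb := hmin _ (fLe_bot _) hle (fun hh => hne' hh.symm)
  have := congrFun hb x₀
  simp [single, bF] at this
  exact hx₀ this

lemma single_inj {X : Type*} {x y : X} {v w : Three} (hv : v ≠ F)
    (h : single x v = single y w) : x = y ∧ v = w := by
  have hx := congrFun h x
  simp only [single, if_pos rfl] at hx
  by_cases hxy : x = y
  · subst hxy; simp only [if_pos rfl] at hx; exact ⟨rfl, hx⟩
  · rw [if_neg hxy] at hx; exact absurd hx hv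


/-- For nonempty `X`, the number of atoms of `𝟛^X` is `2 ⬝ |X|`. -/
theorem stmt10 {X : Type*} [Nonempty X] :
    Cardinal.mk {α : X → Three // IsAtom3 α} = 2 * Cardinal.mk X := by
  have e : (X ⊕ X) ≃ {α : X → Three // IsAtom3 α} := by
    apply Equiv.ofBijective (fun s => match s with
      | Sum.inl x => ⟨single x T, single_isAtom x T (by decide)⟩
      | Sum.inr x => ⟨single x U, single_isAtom x U (by decide)⟩)
    constructor
    · rintro (x | x) (y | y) h <;>
        simp only [Subtype.mk.injEq] at h
      · exact congrArg Sum.inl (single_inj (by decide) h).1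
      · exact absurd (single_inj (by decide) h).2 (by decide)
      · exact absurd (single_inj (by decide) h).2 (by decide)
      · exact congrArg Sum.inr (single_inj (by decide) h).1
    · rintro ⟨α, hα⟩
      obtain ⟨x₀, hx₀, hform⟩ := atom_form hα
      cases hv : α x₀ with
      | T => rw [hv] at hform; exact ⟨Sum.inl x₀, Subtype.ext hform.symm⟩
      | F => exact absurd hv hx₀
      | U => rw [hv] at hform; exact ⟨Sum.inr x₀, Subtype.ext hform.symm⟩
  rw [← Cardinal.mk_congr e, Cardinal.mk_sum, Cardinal.lift_id, two_mul]
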